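/- Convex hull of a single binarized neuron: the convex hull in ℝ^n × ℝ of the set {(x, u) ∈ {0,1}^n × {0,1} : u = 1_{ℝ₊}(a(x))} equals the set of all (x, u) ∈ [0,1]^n × [0,1] that, for every subset J of {j ∈ {1,…,n} : W_j ≠ 0}, satisfy the two inequalities Σ_{j ∈ J}(W_j(2x_j − 1) − (2u − 1)) ≥ (R − UB + 1)·u and Σ_{j ∈ J}(W_j(2x_j − 1) − (2u − 1)) ≤ (R − LB − 1)·(1 − u). -/

import Mathlib

open Finset

private lemma sum_mul_update {n : ℕ} (W x : Fin n → ℝ) (j₀ : Fin n) (t : ℝ) :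
    ∑ j, W j * Function.update x j₀ t j = (∑ j, W j * x j) + W j₀ * (t - x j₀) := by
  classical
  have : ∀ j ∈ Finset.univ, W j * Function.update x j₀ t j
      = W j * x j + (if j = j₀ then W j₀ * (t - x j₀) else 0) := by
    intro j _
    by_cases hj : j = j₀
    · subst hj; rw [Function.update_self, if_pos rfl]; ring
    · rw [Function.update_of_ne hj, if_neg hj]; ring
  rw [Finset.sum_congr rfl this, Finset.sum_add_distrib, Finset.sum_ite_eq' Finset.univ j₀]
  simp

private lemma exists_int_finset_sum {α : Type*} [DecidableEq α] {s : Finset α} {f : α → ℝ}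
    (h : ∀ j ∈ s, ∃ M : ℤ, (M : ℝ) = f j) : ∃ M : ℤ, (M : ℝ) = ∑ j ∈ s, f j := by
  classical
  induction s using Finset.induction with
  | empty => exact ⟨0, by simp⟩
  | insert _ _ hj ih =>
    obtain ⟨a, ha⟩ := h _ (mem_insert_self _ _)
    obtain ⟨M, hM⟩ := ih (fun j hj' => h j (mem_insert_of_mem hj'))
    exact ⟨a + M, by rw [Finset.sum_insert hj]; push_cast; rw [ha, hM]⟩

private lemma combo_mem_convexHull {E : Type*} [AddCommGroup E] [Module ℝ E]
    {S : Set E} {y0 y1 x : E} {a b : ℝ} (h0 : y0 ∈ convexHull ℝ S) (h1 : y1 ∈ convexHull ℝ S)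
    (ha : 0 ≤ a) (hb : 0 ≤ b) (hab : a + b = 1) (hx : x = a • y0 + b • y1) :
    x ∈ convexHull ℝ S := hx ▸ (convex_convexHull ℝ S) h0 h1 ha hb hab

private lemma slice_mem_convexHull {n : ℕ} (W : Fin n → ℝ)
    (hW : ∀ j, W j = -1 ∨ W j = 0 ∨ W j = 1) (c : ℤ) :
    ∀ (N : ℕ) (x : Fin n → ℝ),
      (Finset.univ.filter (fun j => x j ≠ 0 ∧ x j ≠ 1)).card ≤ N →
      (∀ j, 0 ≤ x j ∧ x j ≤ 1) → (c : ℝ) ≤ ∑ j, W j * x j →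
      x ∈ convexHull ℝ {v : Fin n → ℝ | (∀ j, v j = 0 ∨ v j = 1) ∧ (c : ℝ) ≤ ∑ j, W j * v j} := by
  classical
  intro N
  induction N with
  | zero =>
    intro x hcard hx hs
    apply subset_convexHull
    refine ⟨fun j => ?_, hs⟩
    by_contra hj
    push_neg at hj
    have : j ∈ Finset.univ.filter (fun j => x j ≠ 0 ∧ x j ≠ 1) := by
      simp [hj.1, hj.2]
    have := Finset.card_pos.2 ⟨j, this⟩
    omega
  | succ N ih =>
    intro x hcard hx hs
    by_cases hallbin : ∀ j, x j = 0 ∨ x j = 1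
    · exact subset_convexHull ℝ _ ⟨hallbin, hs⟩
    push_neg at hallbin
    have cardlem : ∀ (y : Fin n → ℝ) (j₀ : Fin n), (x j₀ ≠ 0 ∧ x j₀ ≠ 1) →
        (y j₀ = 0 ∨ y j₀ = 1) →
        (∀ j, j ≠ j₀ → (y j ≠ 0 ∧ y j ≠ 1) → (x j ≠ 0 ∧ x j ≠ 1)) →
        (Finset.univ.filter (fun j => y j ≠ 0 ∧ y j ≠ 1)).card ≤ N := by
      intro y j₀ hfrac hbin hother
      have hsub : Finset.univ.filter (fun j => y j ≠ 0 ∧ y j ≠ 1) ⊆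
          (Finset.univ.filter (fun j => x j ≠ 0 ∧ x j ≠ 1)).erase j₀ := by
        intro j hj
        simp only [Finset.mem_filter, Finset.mem_univ, true_and] at hj
        have hne : j ≠ j₀ := by
          rintro rfl
          rcases hbin with h | h
          · exact hj.1 h
          · exact hj.2 h
        refine Finset.mem_erase.2 ⟨hne, ?_⟩
        simp only [Finset.mem_filter, Finset.mem_univ, true_and]
        exact hother j hne hj
      have hmem : j₀ ∈ Finset.univ.filter (fun j => x j ≠ 0 ∧ x j ≠ 1) := by
        simp [hfrac.1, hfrac.2]
      have := Finset.card_le_card hsub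
      rw [Finset.card_erase_of_mem hmem] at this
      omega
    -- splitting a single coordinate (both endpoints keep the sum condition)
    have split_one : ∀ (j₀ : Fin n), (x j₀ ≠ 0 ∧ x j₀ ≠ 1) →
        ((c : ℝ) ≤ ∑ j, W j * Function.update x j₀ 0 j) →
        ((c : ℝ) ≤ ∑ j, W j * Function.update x j₀ 1 j) →
        x ∈ convexHull ℝ {v : Fin n → ℝ | (∀ j, v j = 0 ∨ v j = 1) ∧ (c : ℝ) ≤ ∑ j, W j * v j} := by
      intro j₀ hfrac hs0 hs1
      have hoth : ∀ (t : ℝ) (j : Fin n), j ≠ j₀ →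
          ((Function.update x j₀ t) j ≠ 0 ∧ (Function.update x j₀ t) j ≠ 1) →
          (x j ≠ 0 ∧ x j ≠ 1) := by
        intro t j hj h; rwa [Function.update_of_ne hj] at h
      have hbnd : ∀ (t : ℝ), 0 ≤ t → t ≤ 1 →
          ∀ j, 0 ≤ Function.update x j₀ t j ∧ Function.update x j₀ t j ≤ 1 := by
        intro t ht ht1 j
        by_cases hj : j = j₀
        · subst hj; rw [Function.update_self]; exact ⟨ht, ht1⟩
        · rw [Function.update_of_ne hj]; exact hx j
      have h0 := ih _ (cardlem _ j₀ hfrac (Or.inl (Function.update_self _ _ _)) (hoth 0))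
        (hbnd 0 le_rfl zero_le_one) hs0
      have h1 := ih _ (cardlem _ j₀ hfrac (Or.inr (Function.update_self _ _ _)) (hoth 1))
        (hbnd 1 zero_le_one le_rfl) hs1
      refine combo_mem_convexHull (a := 1 - x j₀) (b := x j₀) h0 h1
        (by linarith [(hx j₀).2]) (hx j₀).1 (by ring) ?_
      funext j
      simp only [Pi.add_apply, Pi.smul_apply, smul_eq_mul]
      by_cases hj : j = j₀
      · subst hj; rw [Function.update_self, Function.update_self]; ring
      · rw [Function.update_of_ne hj, Function.update_of_ne hj]; ring
    by_cases hzero : ∃ j, (x j ≠ 0 ∧ x j ≠ 1) ∧ W j = 0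
    · obtain ⟨j₀, hfrac, hW0⟩ := hzero
      refine split_one j₀ hfrac ?_ ?_ <;>
        · rw [sum_mul_update, hW0]; linarith
    · push_neg at hzero
      obtain ⟨j₀, hfrac0, hfrac1⟩ := hallbin
      have hfrac : x j₀ ≠ 0 ∧ x j₀ ≠ 1 := ⟨hfrac0, hfrac1⟩
      have hWj₀ : W j₀ = -1 ∨ W j₀ = 1 := by
        rcases hW j₀ with h | h | h
        · exact Or.inl h
        · exact absurd h (hzero j₀ hfrac)
        · exact Or.inr h
      by_cases hpair : ∃ j₁, j₁ ≠ j₀ ∧ (x j₁ ≠ 0 ∧ x j₁ ≠ 1)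
      · obtain ⟨j₁, hne, hfrac1⟩ := hpair
        have hWj₁ : W j₁ = -1 ∨ W j₁ = 1 := by
          rcases hW j₁ with h | h | h
          · exact Or.inl h
          · exact absurd h (hzero j₁ hfrac1)
          · exact Or.inr h
        have hne' : j₀ ≠ j₁ := hne.symm
        have h0lt : 0 < x j₀ := lt_of_le_of_ne (hx j₀).1 (Ne.symm hfrac.1)
        have h1lt : x j₀ < 1 := lt_of_le_of_ne (hx j₀).2 hfrac.2
        have g0lt : 0 < x j₁ := lt_of_le_of_ne (hx j₁).1 (Ne.symm hfrac1.1)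
        have g1lt : x j₁ < 1 := lt_of_le_of_ne (hx j₁).2 hfrac1.2
        set A : ℝ := if W j₀ = 1 then 1 - x j₀ else x j₀ with hA
        set B : ℝ := if W j₁ = 1 then x j₁ else 1 - x j₁ with hB
        set A' : ℝ := if W j₀ = 1 then x j₀ else 1 - x j₀ with hA'
        set B' : ℝ := if W j₁ = 1 then 1 - x j₁ else x j₁ with hB'
        have hApos : 0 < A := by rw [hA]; split_ifs <;> linarith
        have hBpos : 0 < B := by rw [hB]; split_ifs <;> linarith
        have hA'pos : 0 < A' := by rw [hA']; split_ifs <;> linarith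
        have hB'pos : 0 < B' := by rw [hB']; split_ifs <;> linarith
        set tp : ℝ := min A B with htpdef
        set tm : ℝ := min A' B' with htmdef
        have htp : 0 < tp := lt_min hApos hBpos
        have htm : 0 < tm := lt_min hA'pos hB'pos
        set y : ℝ → Fin n → ℝ :=
          fun t => Function.update (Function.update x j₀ (x j₀ + W j₀ * t)) j₁ (x j₁ - W j₁ * t)
          with hy
        have hyj₀ : ∀ t, y t j₀ = x j₀ + W j₀ * t := by
          intro t
          rw [hy]
          simp only
          rw [Function.update_of_ne hne', Function.update_self]
        have hyj₁ : ∀ t, y t j₁ = x j₁ - W j₁ * t := by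
          intro t
          rw [hy]
          simp only
          rw [Function.update_self]
        have hyoth : ∀ t j, j ≠ j₀ → j ≠ j₁ → y t j = x j := by
          intro t j h0 h1
          rw [hy]
          simp only
          rw [Function.update_of_ne h1, Function.update_of_ne h0]
        have hsq₀ : W j₀ * W j₀ = 1 := by rcases hWj₀ with h | h <;> rw [h] <;> norm_num
        have hsq₁ : W j₁ * W j₁ = 1 := by rcases hWj₁ with h | h <;> rw [h] <;> norm_num
        have hysum : ∀ t, ∑ j, W j * y t j = ∑ j, W j * x j := by
          intro t
          rw [hy]
          simp only
          rw [sum_mul_update, sum_mul_update, Function.update_of_ne hne]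
          linear_combination (t : ℝ) * hsq₀ - t * hsq₁
        have hybnd : ∀ t, -A' ≤ t → t ≤ A → -B' ≤ t → t ≤ B →
            ∀ j, 0 ≤ y t j ∧ y t j ≤ 1 := by
          intro t ht1 ht2 ht3 ht4 j
          by_cases hj0 : j = j₀
          · subst hj0
            rw [hyj₀]
            rcases hWj₀ with h | h <;> rw [h] at hA hA' ⊢ <;>
              norm_num at hA hA' <;> constructor <;> linarith
          by_cases hj1 : j = j₁
          · subst hj1
            rw [hyj₁]
            rcases hWj₁ with h | h <;> rw [h] at hB hB' ⊢ <;>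
              norm_num at hB hB' <;> constructor <;> linarith
          · rw [hyoth _ _ hj0 hj1]; exact hx j
        have hothgen : ∀ t (j : Fin n), j ≠ j₀ → j ≠ j₁ →
            (y t j ≠ 0 ∧ y t j ≠ 1) → (x j ≠ 0 ∧ x j ≠ 1) := by
          intro t j h0 h1 hfr
          rwa [hyoth _ _ h0 h1] at hfr
        have hcardp : (Finset.univ.filter (fun j => y tp j ≠ 0 ∧ y tp j ≠ 1)).card ≤ N := by
          rcases min_cases A B with ⟨he, _⟩ | ⟨he, _⟩
          · refine cardlem _ j₀ hfrac ?_ ?_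
            · rw [hyj₀, htpdef, he]
              rcases hWj₀ with h | h
              · left; rw [h] at hA ⊢; norm_num at hA; rw [hA]; ring
              · right; rw [h] at hA ⊢; norm_num at hA; rw [hA]; ring
            · intro j hj hfr
              by_cases hj1 : j = j₁
              · subst hj1; exact hfrac1
              · exact hothgen _ _ hj hj1 hfr
          · refine cardlem _ j₁ hfrac1 ?_ ?_
            · rw [hyj₁, htpdef, he]
              rcases hWj₁ with h | h
              · right; rw [h] at hB ⊢; norm_num at hB; rw [hB]; ring
              · left; rw [h] at hB ⊢; norm_num at hB; rw [hB]; ring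
            · intro j hj hfr
              by_cases hj0 : j = j₀
              · subst hj0; exact hfrac
              · exact hothgen _ _ hj0 hj hfr
        have hcardm : (Finset.univ.filter (fun j => y (-tm) j ≠ 0 ∧ y (-tm) j ≠ 1)).card ≤ N := by
          rcases min_cases A' B' with ⟨he, _⟩ | ⟨he, _⟩
          · refine cardlem _ j₀ hfrac ?_ ?_
            · rw [hyj₀, htmdef, he]
              rcases hWj₀ with h | h
              · right; rw [h] at hA' ⊢; norm_num at hA'; rw [hA']; ring
              · left; rw [h] at hA' ⊢; norm_num at hA'; rw [hA']; ring
            · intro j hj hfr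
              by_cases hj1 : j = j₁
              · subst hj1; exact hfrac1
              · exact hothgen _ _ hj hj1 hfr
          · refine cardlem _ j₁ hfrac1 ?_ ?_
            · rw [hyj₁, htmdef, he]
              rcases hWj₁ with h | h
              · left; rw [h] at hB' ⊢; norm_num at hB'; rw [hB']; ring
              · right; rw [h] at hB' ⊢; norm_num at hB'; rw [hB']; ring
            · intro j hj hfr
              by_cases hj0 : j = j₀
              · subst hj0; exact hfrac
              · exact hothgen _ _ hj0 hj hfr
        have hp := ih (y tp) hcardp
          (hybnd tp (by linarith) (min_le_left _ _) (by linarith) (min_le_right _ _))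
          (by rw [hysum]; exact hs)
        have hm := ih (y (-tm)) hcardm
          (hybnd (-tm) (neg_le_neg (min_le_left _ _)) (by linarith)
            (neg_le_neg (min_le_right _ _)) (by linarith))
          (by rw [hysum]; exact hs)
        have hsumpos : (0:ℝ) < tp + tm := by linarith
        have hsumne : tp + tm ≠ 0 := ne_of_gt hsumpos
        refine combo_mem_convexHull (a := tm / (tp + tm)) (b := tp / (tp + tm)) hp hm
          (by positivity) (by positivity) (by field_simp; ring) ?_
        funext j
        simp only [Pi.add_apply, Pi.smul_apply, smul_eq_mul]
        by_cases hj0 : j = j₀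
        · subst hj0; rw [hyj₀, hyj₀]; field_simp; ring
        by_cases hj1 : j = j₁
        · subst hj1; rw [hyj₁, hyj₁]; field_simp; ring
        · rw [hyoth _ _ hj0 hj1, hyoth _ _ hj0 hj1]; field_simp; ring
      · -- exactly one fractional coordinate
        push_neg at hpair
        have hbinoth : ∀ j, j ≠ j₀ → x j = 0 ∨ x j = 1 := by
          intro j hj
          by_cases h0 : x j = 0
          · exact Or.inl h0
          · exact Or.inr (hpair j hj h0)
        obtain ⟨M, hM⟩ : ∃ M : ℤ, (M : ℝ) = ∑ j ∈ Finset.univ.erase j₀, W j * x j := by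
          apply exists_int_finset_sum
          intro j hj
          have hne := (Finset.mem_erase.1 hj).1
          rcases hW j with h | h | h <;> rcases hbinoth j hne with h' | h'
          · exact ⟨0, by rw [h, h']; norm_num⟩
          · exact ⟨-1, by rw [h, h']; norm_num⟩
          · exact ⟨0, by rw [h]; norm_num⟩
          · exact ⟨0, by rw [h]; norm_num⟩
          · exact ⟨0, by rw [h, h']; norm_num⟩
          · exact ⟨1, by rw [h, h']; norm_num⟩
        have hsplit : ∑ j, W j * x j = (M : ℝ) + W j₀ * x j₀ := by
          rw [hM, Finset.sum_erase_add _ _ (Finset.mem_univ j₀)]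
        rw [hsplit] at hs
        have h0le : 0 < x j₀ := lt_of_le_of_ne (hx j₀).1 (Ne.symm hfrac0)
        have h1le : x j₀ < 1 := lt_of_le_of_ne (hx j₀).2 hfrac1
        have key : (c : ℝ) ≤ M + W j₀ * 0 ∧ (c : ℝ) ≤ M + W j₀ * 1 := by
          rcases hWj₀ with h | h
          · rw [h] at hs ⊢
            have h1 : (c : ℝ) < M := by linarith
            have h2 : c < M := by exact_mod_cast h1
            have h3 : (c : ℝ) + 1 ≤ M := by exact_mod_cast h2
            constructor <;> linarith
          · rw [h] at hs ⊢
            have h1 : (c : ℝ) < M + 1 := by push_cast; linarith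
            have h2 : c < M + 1 := by exact_mod_cast h1
            have h3 : (c : ℝ) ≤ M := by exact_mod_cast Int.lt_add_one_iff.mp h2
            constructor <;> linarith
        refine split_one j₀ hfrac ?_ ?_ <;> rw [sum_mul_update, hsplit]
        · calc (c:ℝ) ≤ M + W j₀ * 0 := key.1
            _ = (M:ℝ) + W j₀ * x j₀ + W j₀ * (0 - x j₀) := by ring
        · calc (c:ℝ) ≤ M + W j₀ * 1 := key.2
            _ = (M:ℝ) + W j₀ * x j₀ + W j₀ * (1 - x j₀) := by ring


set_option maxHeartbeats 2000000 in
theorem stmt_8 (n : ℕ) (W : Fin n → ℝ) (b : ℤ)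
    (hW : ∀ j, W j = -1 ∨ W j = 0 ∨ W j = 1)
    (LB UB R : ℝ)
    (hLB : LB = ∑ j, (W j - |W j|))
    (hUB : UB = ∑ j, (W j + |W j|))
    (hR : R = 2 * (⌈((∑ j, W j) - (b : ℝ)) / 2⌉ : ℝ) - 1) :
    convexHull ℝ
        {p : (Fin n → ℝ) × ℝ |
          (∀ j, p.1 j = 0 ∨ p.1 j = 1) ∧ (p.2 = 0 ∨ p.2 = 1) ∧
            p.2 = if 0 ≤ (∑ j, W j * (2 * p.1 j - 1)) + (b : ℝ) then 1 else 0} =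
      {p : (Fin n → ℝ) × ℝ |
        (∀ j, 0 ≤ p.1 j ∧ p.1 j ≤ 1) ∧ (0 ≤ p.2 ∧ p.2 ≤ 1) ∧
          ∀ J : Finset (Fin n), (∀ j ∈ J, W j ≠ 0) →
            (R - UB + 1) * p.2 ≤ (∑ j ∈ J, (W j * (2 * p.1 j - 1) - (2 * p.2 - 1))) ∧
              (∑ j ∈ J, (W j * (2 * p.1 j - 1) - (2 * p.2 - 1))) ≤
                (R - LB - 1) * (1 - p.2)} := by
  classical
  set K : ℤ := ⌈((∑ j, W j) - (b : ℝ)) / 2⌉ with hK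
  set np : ℕ := (Finset.univ.filter (fun j => W j = (1:ℝ))).card with hnp
  set nm : ℕ := (Finset.univ.filter (fun j => W j = (-1:ℝ))).card with hnm
  set S₀ : Finset (Fin n) := Finset.univ.filter (fun j => W j ≠ 0) with hS₀
  have hS₀mem : ∀ j ∈ S₀, W j ≠ 0 := fun j hj => (Finset.mem_filter.1 hj).2
  have hUBv : UB = 2 * np := by
    rw [hUB]
    have h1 : ∀ j ∈ Finset.univ, W j + |W j| = if W j = (1:ℝ) then 2 else 0 := by
      intro j _
      rcases hW j with h | h | h <;> rw [h] <;> norm_num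
    rw [Finset.sum_congr rfl h1, Finset.sum_ite, Finset.sum_const, Finset.sum_const]
    simp [hnp, mul_comm]
  have hLBv : LB = -2 * nm := by
    rw [hLB]
    have h1 : ∀ j ∈ Finset.univ, W j - |W j| = if W j = (-1:ℝ) then -2 else 0 := by
      intro j _
      rcases hW j with h | h | h <;> rw [h] <;> norm_num
    rw [Finset.sum_congr rfl h1, Finset.sum_ite, Finset.sum_const, Finset.sum_const]
    simp [hnm]
    ring
  have hscard : (S₀.card : ℝ) = np + nm := by
    have : S₀ = Finset.univ.filter (fun j => W j = (1:ℝ))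
        ∪ Finset.univ.filter (fun j => W j = (-1:ℝ)) := by
      rw [hS₀, ← Finset.filter_or]
      apply Finset.filter_congr
      intro j _
      constructor
      · intro h; rcases hW j with h' | h' | h'
        · exact Or.inr h'
        · exact absurd h' h
        · exact Or.inl h'
      · rintro (h | h) <;> rw [h] <;> norm_num
    rw [this, Finset.card_union_of_disjoint]
    · push_cast; ring
    · rw [Finset.disjoint_filter]
      intro j _ h1 h2
      rw [h1] at h2
      norm_num at h2
  set z : (Fin n → ℝ) → Fin n → ℝ := fun x j => if W j = -1 then 1 - x j else x j with hzdef
  have hz : ∀ (x : Fin n → ℝ) j, W j ≠ 0 → W j * (2 * x j - 1) = 2 * z x j - 1 := by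
    intro x j hj
    rcases hW j with h | h | h
    · rw [hzdef]; simp only; rw [if_pos h, h]; ring
    · exact absurd h hj
    · rw [hzdef]; simp only; rw [if_neg (by rw [h]; norm_num), h]; ring
  have hfiltereq : S₀.filter (fun j => W j = (-1:ℝ)) = Finset.univ.filter (fun j => W j = (-1:ℝ)) := by
    rw [hS₀, Finset.filter_filter]
    apply Finset.filter_congr
    intro j _
    constructor
    · exact fun h => h.2
    · exact fun h => ⟨by rw [h]; norm_num, h⟩
  have hzsum : ∀ (x : Fin n → ℝ), ∑ j, W j * x j = (∑ j ∈ S₀, z x j) - nm := by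
    intro x
    have h1 : ∑ j ∈ S₀, W j * x j = ∑ j, W j * x j := by
      rw [hS₀]
      apply Finset.sum_filter_of_ne
      intro j _ h h0
      rw [h0] at h; simp at h
    rw [← h1]
    have h2 : ∀ j ∈ S₀, W j * x j = z x j - (if W j = (-1:ℝ) then 1 else 0) := by
      intro j hj
      have hj0 := hS₀mem j hj
      rcases hW j with h | h | h
      · rw [hzdef]; simp only; rw [if_pos h, if_pos h, h]; ring
      · exact absurd h hj0
      · have hne : W j ≠ -1 := by rw [h]; norm_num
        rw [hzdef]; simp only; rw [if_neg hne, if_neg hne, h]; ring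
    rw [Finset.sum_congr rfl h2, Finset.sum_sub_distrib]
    congr 1
    rw [Finset.sum_ite, Finset.sum_const, Finset.sum_const, hfiltereq]
    simp [hnm]
  have hzbox : ∀ (x : Fin n → ℝ), (∀ j, 0 ≤ x j ∧ x j ≤ 1) → ∀ j, 0 ≤ z x j ∧ z x j ≤ 1 := by
    intro x hx j
    rw [hzdef]; simp only
    split_ifs
    · constructor <;> linarith [(hx j).1, (hx j).2]
    · exact hx j
  have hzbin : ∀ (x : Fin n → ℝ), (∀ j, x j = 0 ∨ x j = 1) → ∀ j, z x j = 0 ∨ z x j = 1 := by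
    intro x hx j
    rw [hzdef]; simp only
    split_ifs
    · rcases hx j with h | h <;> rw [h] <;> [right; left] <;> norm_num
    · exact hx j
  have hint : ∀ (v : Fin n → ℝ), (∀ j, v j = 0 ∨ v j = 1) →
      ∃ M : ℤ, (M : ℝ) = ∑ j, W j * v j := by
    intro v hv
    apply exists_int_finset_sum
    intro j _
    rcases hW j with h | h | h <;> rcases hv j with h' | h'
    · exact ⟨0, by rw [h, h']; norm_num⟩
    · exact ⟨-1, by rw [h, h']; norm_num⟩
    · exact ⟨0, by rw [h]; norm_num⟩
    · exact ⟨0, by rw [h]; norm_num⟩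
    · exact ⟨0, by rw [h, h']; norm_num⟩
    · exact ⟨1, by rw [h, h']; norm_num⟩
  have hlin : ∀ (v : Fin n → ℝ), ∑ j, W j * (2 * v j - 1) = 2 * (∑ j, W j * v j) - ∑ j, W j := by
    intro v
    have : ∀ j ∈ Finset.univ, W j * (2 * v j - 1) = 2 * (W j * v j) - W j := fun j _ => by ring
    rw [Finset.sum_congr rfl this, Finset.sum_sub_distrib, ← Finset.mul_sum]
  have hvertiff : ∀ (v : Fin n → ℝ) (M : ℤ), (M : ℝ) = ∑ j, W j * v j →
      ((0 ≤ (∑ j, W j * (2 * v j - 1)) + (b:ℝ)) ↔ (K : ℝ) ≤ ∑ j, W j * v j) := by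
    intro v M hM
    rw [hlin, ← hM]
    constructor
    · intro h
      have h1 : ((∑ j, W j) - (b:ℝ)) / 2 ≤ (M : ℝ) := by linarith
      have h2 : K ≤ M := Int.ceil_le.2 h1
      exact_mod_cast h2
    · intro h
      have h2 : K ≤ M := by exact_mod_cast h
      have h1 : ((∑ j, W j) - (b:ℝ)) / 2 ≤ (M : ℝ) := le_trans (Int.le_ceil _) (by exact_mod_cast h2)
      linarith
  have hmid : ∀ (x : Fin n → ℝ) (u : ℝ) (J : Finset (Fin n)), (∀ j ∈ J, W j ≠ 0) →
      ∑ j ∈ J, (W j * (2 * x j - 1) - (2 * u - 1)) = 2 * (∑ j ∈ J, (z x j - u)) := by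
    intro x u J hJ
    rw [Finset.mul_sum]
    refine Finset.sum_congr rfl fun j hj => ?_
    have := hz x j (hJ j hj)
    linear_combination this
  -- the vertex set is contained in the inequality polytope
  have hvertsub : {p : (Fin n → ℝ) × ℝ |
          (∀ j, p.1 j = 0 ∨ p.1 j = 1) ∧ (p.2 = 0 ∨ p.2 = 1) ∧
            p.2 = if 0 ≤ (∑ j, W j * (2 * p.1 j - 1)) + (b : ℝ) then 1 else 0} ⊆
      {p : (Fin n → ℝ) × ℝ |
        (∀ j, 0 ≤ p.1 j ∧ p.1 j ≤ 1) ∧ (0 ≤ p.2 ∧ p.2 ≤ 1) ∧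
          ∀ J : Finset (Fin n), (∀ j ∈ J, W j ≠ 0) →
            (R - UB + 1) * p.2 ≤ (∑ j ∈ J, (W j * (2 * p.1 j - 1) - (2 * p.2 - 1))) ∧
              (∑ j ∈ J, (W j * (2 * p.1 j - 1) - (2 * p.2 - 1))) ≤
                (R - LB - 1) * (1 - p.2)} := by
    rintro ⟨v, u⟩ ⟨hbin, hu01, hcond⟩
    simp only [Set.mem_setOf_eq]
    dsimp only at hbin hu01 hcond ⊢
    obtain ⟨M, hM⟩ := hint v hbin
    have hbox : ∀ j, 0 ≤ v j ∧ v j ≤ 1 := by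
      intro j; rcases hbin j with h | h <;> rw [h] <;> norm_num
    have hzb := hzbin v hbin
    have hz01 : ∀ j, 0 ≤ z v j ∧ z v j ≤ 1 := by
      intro j; rcases hzb j with h | h <;> rw [h] <;> norm_num
    have hzS : ∑ j ∈ S₀, z v j = (M:ℝ) + nm := by
      have := hzsum v
      rw [← hM] at this
      linarith
    refine ⟨hbox, ?_, ?_⟩
    · rcases hu01 with h | h <;> rw [h] <;> norm_num
    intro J hJ
    have hJsub : J ⊆ S₀ := fun j hj =>
      Finset.mem_filter.2 ⟨Finset.mem_univ j, hJ j hj⟩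
    have hcardle : (J.card : ℝ) ≤ S₀.card := by exact_mod_cast Finset.card_le_card hJsub
    have hsdiff : ∑ j ∈ S₀ \ J, z v j + ∑ j ∈ J, z v j = ∑ j ∈ S₀, z v j :=
      Finset.sum_sdiff hJsub
    have hsdcard : ((S₀ \ J).card : ℝ) = (S₀.card : ℝ) - J.card := by
      rw [Finset.card_sdiff_of_subset hJsub]
      have := Finset.card_le_card hJsub
      push_cast [Nat.cast_sub this]
      ring
    have hsdub : ∑ j ∈ S₀ \ J, z v j ≤ ((S₀ \ J).card : ℝ) := by
      calc ∑ j ∈ S₀ \ J, z v j ≤ ∑ j ∈ S₀ \ J, 1 :=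
            Finset.sum_le_sum fun j _ => (hz01 j).2
        _ = _ := by rw [Finset.sum_const, nsmul_eq_mul, mul_one]
    have hmid' := hmid v u J hJ
    have hsum_sub : ∑ j ∈ J, (z v j - u) = (∑ j ∈ J, z v j) - J.card * u := by
      rw [Finset.sum_sub_distrib, Finset.sum_const, nsmul_eq_mul]
    by_cases hge : 0 ≤ (∑ j, W j * (2 * v j - 1)) + (b:ℝ)
    · rw [if_pos hge] at hcond
      subst hcond
      have hKM : (K:ℝ) ≤ (M:ℝ) := by rw [hM]; exact (hvertiff v M hM).1 hge
      rw [hmid v 1 J hJ]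
      constructor
      · rw [hR, hUBv, hsum_sub]
        have hJz : (K:ℝ) - np + J.card ≤ ∑ j ∈ J, z v j := by
          have := hscard
          linarith [hsdub, hsdiff, hsdcard, hzS]
        linarith
      · have h1 : ∑ j ∈ J, (z v j - 1) ≤ 0 :=
          Finset.sum_nonpos fun j _ => by linarith [(hz01 j).2]
        nlinarith
    · rw [if_neg hge] at hcond
      subst hcond
      push_neg at hge
      have hMK : (M:ℝ) ≤ (K:ℝ) - 1 := by
        rw [hlin, ← hM] at hge
        have h1 : (M : ℝ) < ((∑ j, W j) - (b:ℝ)) / 2 := by linarith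
        have h2 : M < K := Int.lt_ceil.2 h1
        have h3 : M ≤ K - 1 := by omega
        exact_mod_cast h3
      rw [hmid v 0 J hJ]
      constructor
      · have h1 : 0 ≤ ∑ j ∈ J, (z v j - 0) :=
          Finset.sum_nonneg fun j _ => by linarith [(hz01 j).1]
        nlinarith
      · rw [hR, hLBv, hsum_sub]
        have hJz : ∑ j ∈ J, z v j ≤ (K:ℝ) - 1 + nm := by
          have h2 : ∑ j ∈ J, z v j ≤ ∑ j ∈ S₀, z v j :=
            Finset.sum_le_sum_of_subset_of_nonneg hJsub fun j _ _ => (hz01 j).1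
          linarith [hzS]
        linarith
  -- the inequality polytope is convex
  have hTconv : Convex ℝ {p : (Fin n → ℝ) × ℝ |
        (∀ j, 0 ≤ p.1 j ∧ p.1 j ≤ 1) ∧ (0 ≤ p.2 ∧ p.2 ≤ 1) ∧
          ∀ J : Finset (Fin n), (∀ j ∈ J, W j ≠ 0) →
            (R - UB + 1) * p.2 ≤ (∑ j ∈ J, (W j * (2 * p.1 j - 1) - (2 * p.2 - 1))) ∧
              (∑ j ∈ J, (W j * (2 * p.1 j - 1) - (2 * p.2 - 1))) ≤
                (R - LB - 1) * (1 - p.2)} := by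
    rintro ⟨x₁, u₁⟩ ⟨hb₁, hu₁, hc₁⟩ ⟨x₂, u₂⟩ ⟨hb₂, hu₂, hc₂⟩ a c ha hc hac
    simp only [Set.mem_setOf_eq, Prod.smul_mk, Prod.mk_add_mk, smul_eq_mul, Pi.add_apply,
      Pi.smul_apply]
    dsimp only at hb₁ hu₁ hc₁ hb₂ hu₂ hc₂ ⊢
    refine ⟨?_, ?_, ?_⟩
    · intro j
      constructor
      · exact add_nonneg (mul_nonneg ha (hb₁ j).1) (mul_nonneg hc (hb₂ j).1)
      · nlinarith [(hb₁ j).2, (hb₂ j).2]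
    · constructor
      · exact add_nonneg (mul_nonneg ha hu₁.1) (mul_nonneg hc hu₂.1)
      · nlinarith [hu₁.2, hu₂.2]
    · intro J hJ
      obtain ⟨l₁, r₁⟩ := hc₁ J hJ
      obtain ⟨l₂, r₂⟩ := hc₂ J hJ
      have hmideq : ∑ j ∈ J, (W j * (2 * (a * x₁ j + c * x₂ j) - 1) - (2 * (a * u₁ + c * u₂) - 1))
          = a * (∑ j ∈ J, (W j * (2 * x₁ j - 1) - (2 * u₁ - 1)))
            + c * (∑ j ∈ J, (W j * (2 * x₂ j - 1) - (2 * u₂ - 1))) := by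
        rw [Finset.mul_sum, Finset.mul_sum, ← Finset.sum_add_distrib]
        refine Finset.sum_congr rfl fun j _ => ?_
        linear_combination (W j - 1) * hac
      constructor
      · rw [hmideq]
        calc (R - UB + 1) * (a * u₁ + c * u₂)
            = a * ((R - UB + 1) * u₁) + c * ((R - UB + 1) * u₂) := by ring
          _ ≤ _ := add_le_add (mul_le_mul_of_nonneg_left l₁ ha) (mul_le_mul_of_nonneg_left l₂ hc)
      · rw [hmideq]
        calc a * (∑ j ∈ J, (W j * (2 * x₁ j - 1) - (2 * u₁ - 1)))
              + c * (∑ j ∈ J, (W j * (2 * x₂ j - 1) - (2 * u₂ - 1)))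
            ≤ a * ((R - LB - 1) * (1 - u₁)) + c * ((R - LB - 1) * (1 - u₂)) :=
              add_le_add (mul_le_mul_of_nonneg_left r₁ ha) (mul_le_mul_of_nonneg_left r₂ hc)
          _ = (R - LB - 1) * (1 - (a * u₁ + c * u₂)) := by linear_combination (R - LB - 1) * hac
  set Vset := {p : (Fin n → ℝ) × ℝ |
          (∀ j, p.1 j = 0 ∨ p.1 j = 1) ∧ (p.2 = 0 ∨ p.2 = 1) ∧
            p.2 = if 0 ≤ (∑ j, W j * (2 * p.1 j - 1)) + (b : ℝ) then 1 else 0} with hVset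
  have hmemV1 : ∀ v : Fin n → ℝ, (∀ j, v j = 0 ∨ v j = 1) → ((K:ℝ) ≤ ∑ j, W j * v j) →
      ((v, (1:ℝ)) : (Fin n → ℝ) × ℝ) ∈ Vset := by
    intro v hv hKv
    rw [hVset]
    refine ⟨hv, Or.inr rfl, ?_⟩
    dsimp only
    obtain ⟨M, hM⟩ := hint v hv
    rw [if_pos ((hvertiff v M hM).2 hKv)]
  have hmemV0 : ∀ v : Fin n → ℝ, (∀ j, v j = 0 ∨ v j = 1) → (∑ j, W j * v j ≤ (K:ℝ) - 1) →
      ((v, (0:ℝ)) : (Fin n → ℝ) × ℝ) ∈ Vset := by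
    intro v hv hKv
    rw [hVset]
    refine ⟨hv, Or.inl rfl, ?_⟩
    dsimp only
    obtain ⟨M, hM⟩ := hint v hv
    rw [if_neg]
    intro hge
    have := (hvertiff v M hM).1 hge
    linarith
  have hemb : ∀ (c : ℝ) (S : Set (Fin n → ℝ)), (∀ v ∈ S, ((v, c) : (Fin n → ℝ) × ℝ) ∈ Vset) →
      ∀ x' ∈ convexHull ℝ S, ((x', c) : (Fin n → ℝ) × ℝ) ∈ convexHull ℝ Vset := by
    intro c S hSV x' hx'
    let f : (Fin n → ℝ) →ᵃ[ℝ] (Fin n → ℝ) × ℝ :=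
      ⟨fun y => (y, c), LinearMap.inl ℝ (Fin n → ℝ) ℝ, by
        intro p v
        refine Prod.ext ?_ ?_ <;> simp⟩
    have himg : f '' (convexHull ℝ S) = convexHull ℝ (f '' S) := AffineMap.image_convexHull f S
    have h1 : ((x', c) : (Fin n → ℝ) × ℝ) ∈ f '' (convexHull ℝ S) := ⟨x', hx', rfl⟩
    rw [himg] at h1
    refine convexHull_mono ?_ h1
    rintro _ ⟨v, hv, rfl⟩
    exact hSV v hv
  refine Set.Subset.antisymm (convexHull_min hvertsub hTconv) ?_
  rintro ⟨x, u⟩ ⟨hbox, ⟨hu0, hu1⟩, hcons⟩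
  dsimp only at hbox hu0 hu1 hcons
  have hS₀sum_sub : ∀ (w : ℝ), ∑ j ∈ S₀, (z x j - w) = (∑ j ∈ S₀, z x j) - S₀.card * w := by
    intro w
    rw [Finset.sum_sub_distrib, Finset.sum_const, nsmul_eq_mul]
  rcases eq_or_lt_of_le hu1 with hu1' | hu1'
  · -- u = 1
    subst hu1'
    have h := (hcons S₀ hS₀mem).1
    rw [hmid x 1 S₀ hS₀mem, hR, hUBv, hS₀sum_sub] at h
    have hKx : (K:ℝ) ≤ ∑ j, W j * x j := by
      have h1 := hzsum x
      have h2 := hscard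
      linarith
    have hx1 := slice_mem_convexHull W hW K _ x le_rfl hbox hKx
    exact hemb 1 _ (fun v hv => hmemV1 v hv.1 hv.2) x hx1
  rcases eq_or_lt_of_le hu0 with hu0' | hu0'
  · -- u = 0
    have hu0'' : u = 0 := hu0'.symm
    subst hu0''
    have h := (hcons S₀ hS₀mem).2
    rw [hmid x 0 S₀ hS₀mem, hR, hLBv, hS₀sum_sub] at h
    have hKx : ∑ j, W j * x j ≤ (K:ℝ) - 1 := by
      have h1 := hzsum x
      linarith
    have hWneg : ∀ j, -W j = -1 ∨ -W j = 0 ∨ -W j = 1 := by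
      intro j; rcases hW j with h' | h' | h' <;> rw [h'] <;> norm_num
    have hnegsum : ∀ (y : Fin n → ℝ), ∑ j, -W j * y j = -∑ j, W j * y j := by
      intro y
      rw [← Finset.sum_neg_distrib]
      exact Finset.sum_congr rfl fun j _ => by ring
    have hx0 := slice_mem_convexHull (fun j => -W j) hWneg (1 - K) _ x le_rfl hbox
      (by rw [hnegsum]; push_cast; linarith)
    refine hemb 0 _ (fun v hv => hmemV0 v hv.1 ?_) x hx0
    have h2 := hv.2
    rw [hnegsum] at h2
    push_cast at h2
    linarith
  · -- 0 < u < 1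
    have hu1c : (0:ℝ) < 1 - u := by linarith
    have hune : u ≠ 0 := ne_of_gt hu0'
    have hzb := hzbox x hbox
    set L : Fin n → ℝ := fun j => if W j = 0 then z x j else max 0 ((z x j - (1 - u)) / u)
      with hLdef
    set Uf : Fin n → ℝ := fun j => if W j = 0 then z x j else min 1 (z x j / u) with hUdef
    have hL0 : ∀ j, 0 ≤ L j := by
      intro j
      rw [hLdef]; dsimp only
      split_ifs with h
      · exact (hzb j).1
      · exact le_max_left _ _
    have hU1 : ∀ j, Uf j ≤ 1 := by
      intro j
      rw [hUdef]; dsimp only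
      split_ifs with h
      · exact (hzb j).2
      · exact min_le_left _ _
    have hLU : ∀ j, L j ≤ Uf j := by
      intro j
      rw [hLdef, hUdef]; dsimp only
      split_ifs with h
      · exact le_refl _
      · apply max_le
        · apply le_min
          · norm_num
          · apply div_nonneg (hzb j).1 (le_of_lt hu0')
        · apply le_min
          · rw [div_le_one hu0']; linarith [(hzb j).2]
          · exact (div_le_div_iff_of_pos_right hu0').2 (by linarith)
    have hUz : ∀ j, W j ≠ 0 → u * Uf j ≤ z x j := by
      intro j hj
      rw [hUdef]; dsimp only
      rw [if_neg hj]
      calc u * min 1 (z x j / u) ≤ u * (z x j / u) :=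
            mul_le_mul_of_nonneg_left (min_le_right _ _) (le_of_lt hu0')
        _ = z x j := by field_simp
    have hLz : ∀ j, W j ≠ 0 → z x j - (1 - u) ≤ u * L j := by
      intro j hj
      rw [hLdef]; dsimp only
      rw [if_neg hj]
      calc z x j - (1 - u) = u * ((z x j - (1 - u)) / u) := by field_simp
        _ ≤ u * max 0 ((z x j - (1 - u)) / u) :=
            mul_le_mul_of_nonneg_left (le_max_right _ _) (le_of_lt hu0')
    set SL : ℝ := ∑ j ∈ S₀, L j with hSL
    set SU : ℝ := ∑ j ∈ S₀, Uf j with hSU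
    have hSLU : SL ≤ SU := Finset.sum_le_sum fun j _ => hLU j
    have hUmin : u * SU = ∑ j ∈ S₀, min u (z x j) := by
      rw [hSU, Finset.mul_sum]
      refine Finset.sum_congr rfl fun j hj => ?_
      rw [hUdef]; dsimp only
      rw [if_neg (hS₀mem j hj), mul_min_of_nonneg _ _ (le_of_lt hu0'), mul_one,
        mul_div_cancel₀ _ hune]
    -- condition (i)
    have hcondU1 : ((K:ℝ) + nm) * u ≤ ∑ j ∈ S₀, min u (z x j) := by
      set J₁ := S₀.filter (fun j => z x j < u) with hJ₁
      have hJ₁mem : ∀ j ∈ J₁, W j ≠ 0 := fun j hj => hS₀mem j (Finset.mem_of_mem_filter j hj)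
      have h := (hcons J₁ hJ₁mem).1
      rw [hmid x u J₁ hJ₁mem, hR, hUBv] at h
      have hsub1 : ∑ j ∈ J₁, (z x j - u) = (∑ j ∈ J₁, z x j) - J₁.card * u := by
        rw [Finset.sum_sub_distrib, Finset.sum_const, nsmul_eq_mul]
      rw [hsub1] at h
      have hsplit : ∑ j ∈ S₀, min u (z x j)
          = (∑ j ∈ J₁, z x j) + (S₀.filter (fun j => ¬ z x j < u)).card * u := by
        rw [← Finset.sum_filter_add_sum_filter_not S₀ (fun j => z x j < u)]
        congr 1
        · exact Finset.sum_congr rfl fun j hj =>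
            min_eq_right (le_of_lt (Finset.mem_filter.1 hj).2)
        · rw [Finset.sum_congr rfl fun j hj =>
            min_eq_left (not_lt.1 (Finset.mem_filter.1 hj).2), Finset.sum_const, nsmul_eq_mul]
      have hcards : (J₁.card : ℝ) + ((S₀.filter (fun j => ¬ z x j < u)).card : ℝ)
          = (S₀.card : ℝ) := by
        have hn := Finset.card_filter_add_card_filter_not (s := S₀)
          (p := fun j => z x j < u)
        exact_mod_cast hn
      rw [hsplit]
      have h2 := hscard
      have h3 : ((J₁.card : ℝ) + ((S₀.filter (fun j => ¬ z x j < u)).card : ℝ)) * u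
          = ((S₀.card : ℝ)) * u := by rw [hcards]
      have h4 : ((S₀.card : ℝ)) * u = ((np:ℝ) + nm) * u := by rw [h2]
      linarith
    -- condition (ii)
    have hcondU2 : (∑ j ∈ S₀, z x j) - ((K:ℝ) + nm - 1) * (1 - u) ≤ ∑ j ∈ S₀, min u (z x j) := by
      set J₂ := S₀.filter (fun j => u ≤ z x j) with hJ₂
      have hJ₂mem : ∀ j ∈ J₂, W j ≠ 0 := fun j hj => hS₀mem j (Finset.mem_of_mem_filter j hj)
      have h := (hcons J₂ hJ₂mem).2
      rw [hmid x u J₂ hJ₂mem, hR, hLBv] at h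
      have hdiff : ∑ j ∈ S₀, (z x j - min u (z x j)) = ∑ j ∈ J₂, (z x j - u) := by
        rw [← Finset.sum_filter_add_sum_filter_not S₀ (fun j => u ≤ z x j)]
        have h1 : ∑ j ∈ J₂, (z x j - min u (z x j)) = ∑ j ∈ J₂, (z x j - u) :=
          Finset.sum_congr rfl fun j hj => by
            rw [min_eq_left (Finset.mem_filter.1 hj).2]
        have h2 : ∑ j ∈ S₀.filter (fun j => ¬ u ≤ z x j), (z x j - min u (z x j)) = 0 :=
          Finset.sum_eq_zero fun j hj => by
            rw [min_eq_right (le_of_lt (not_le.1 (Finset.mem_filter.1 hj).2))]; ring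
        rw [h1, h2, add_zero]
      have hdiff2 : ∑ j ∈ S₀, (z x j - min u (z x j))
          = (∑ j ∈ S₀, z x j) - ∑ j ∈ S₀, min u (z x j) := Finset.sum_sub_distrib _ _
      linarith
    set T₀ : ℝ := max (max ((K:ℝ) + nm)
        (((∑ j ∈ S₀, z x j) - ((K:ℝ) + nm - 1) * (1 - u)) / u)) SL with hT₀
    have hT₀U : T₀ ≤ SU := by
      refine max_le (max_le ?_ ?_) hSLU
      · have h1 : u * ((K:ℝ) + nm) ≤ u * SU := by rw [hUmin, mul_comm]; exact hcondU1
        exact le_of_mul_le_mul_left h1 hu0'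
      · rw [div_le_iff₀ hu0']
        have h1 : (∑ j ∈ S₀, z x j) - ((K:ℝ) + nm - 1) * (1 - u) ≤ u * SU := by
          rw [hUmin]; exact hcondU2
        linarith
    have hT₀L : SL ≤ T₀ := le_max_right _ _
    have hT₀K : (K:ℝ) + nm ≤ T₀ := le_trans (le_max_left _ _) (le_max_left _ _)
    have hT₀2 : (∑ j ∈ S₀, z x j) - ((K:ℝ) + nm - 1) * (1 - u) ≤ u * T₀ := by
      have h1 : ((∑ j ∈ S₀, z x j) - ((K:ℝ) + nm - 1) * (1 - u)) / u ≤ T₀ :=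
        le_trans (le_max_right _ _) (le_max_left _ _)
      rw [div_le_iff₀ hu0'] at h1
      linarith
    set t : ℝ := (T₀ - SL) / (SU - SL) with htdef
    have ht0 : 0 ≤ t := div_nonneg (by linarith) (by linarith)
    have ht1 : t ≤ 1 := by
      rcases lt_or_eq_of_le hSLU with hlt | heq
      · rw [htdef, div_le_one (by linarith)]
        linarith
      · rw [htdef, show SU - SL = 0 by rw [heq]; ring, div_zero]
        norm_num
    set z1 : Fin n → ℝ := fun j => L j + t * (Uf j - L j) with hz1def
    have hz1L : ∀ j, L j ≤ z1 j := by
      intro j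
      rw [hz1def]; dsimp only
      nlinarith [hLU j]
    have hz1U : ∀ j, z1 j ≤ Uf j := by
      intro j
      rw [hz1def]; dsimp only
      nlinarith [hLU j]
    have hz1sum : ∑ j ∈ S₀, z1 j = T₀ := by
      have h1 : ∑ j ∈ S₀, z1 j = SL + t * (SU - SL) := by
        rw [hz1def]
        dsimp only
        rw [Finset.sum_add_distrib, ← Finset.mul_sum, Finset.sum_sub_distrib]
      rw [h1]
      rcases lt_or_eq_of_le hSLU with hlt | heq
      · rw [htdef, div_mul_cancel₀ _ (sub_ne_zero.mpr hlt.ne')]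
        ring
      · have hTL : T₀ = SL := le_antisymm (by rw [heq]; exact hT₀U) hT₀L
        rw [show SU - SL = 0 by rw [heq]; ring, mul_zero, hTL, add_zero]
    set x1 : Fin n → ℝ := fun j => if W j = -1 then 1 - z1 j else z1 j with hx1def
    have hz1box : ∀ j, 0 ≤ z1 j ∧ z1 j ≤ 1 :=
      fun j => ⟨le_trans (hL0 j) (hz1L j), le_trans (hz1U j) (hU1 j)⟩
    have hx1box : ∀ j, 0 ≤ x1 j ∧ x1 j ≤ 1 := by
      intro j
      rw [hx1def]; dsimp only
      split_ifs
      · constructor <;> linarith [(hz1box j).1, (hz1box j).2]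
      · exact hz1box j
    have hzx1 : ∀ j, z x1 j = z1 j := by
      intro j
      rw [hzdef, hx1def]; dsimp only
      split_ifs with h
      · ring
      · rfl
    have hsum1 : ∑ j, W j * x1 j = T₀ - nm := by
      rw [hzsum x1, Finset.sum_congr rfl fun j _ => hzx1 j, hz1sum]
    have hW0x1 : ∀ j, W j = 0 → x1 j = x j := by
      intro j h
      have hWm : W j ≠ -1 := by rw [h]; norm_num
      have hzj : z x j = x j := by rw [hzdef]; dsimp only; rw [if_neg hWm]
      have hLj : L j = x j := by rw [hLdef]; dsimp only; rw [if_pos h, hzj]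
      have hUj : Uf j = x j := by rw [hUdef]; dsimp only; rw [if_pos h, hzj]
      rw [hx1def]; dsimp only
      rw [if_neg hWm, hz1def]; dsimp only
      rw [hLj, hUj]; ring
    set x0 : Fin n → ℝ := fun j => (x j - u * x1 j) / (1 - u) with hx0def
    have hx0box : ∀ j, 0 ≤ x0 j ∧ x0 j ≤ 1 := by
      intro j
      rw [hx0def]; dsimp only
      rcases hW j with h | h | h
      · -- W j = -1
        have hWj : W j ≠ 0 := by rw [h]; norm_num
        have hxz : z x j = 1 - x j := by rw [hzdef]; dsimp only; rw [if_pos h]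
        have hx1z : x1 j = 1 - z1 j := by rw [hx1def]; dsimp only; rw [if_pos h]
        have h1 : u * z1 j ≤ z x j :=
          le_trans (mul_le_mul_of_nonneg_left (hz1U j) (le_of_lt hu0')) (hUz j hWj)
        have h2 : z x j - (1 - u) ≤ u * z1 j :=
          le_trans (hLz j hWj) (mul_le_mul_of_nonneg_left (hz1L j) (le_of_lt hu0'))
        rw [hx1z]
        constructor
        · apply div_nonneg ?_ (le_of_lt hu1c); nlinarith
        · rw [div_le_one hu1c]; nlinarith
      · -- W j = 0
        rw [hW0x1 j h]
        constructor
        · apply div_nonneg ?_ (le_of_lt hu1c); nlinarith [(hbox j).1]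
        · rw [div_le_one hu1c]; nlinarith [(hbox j).2]
      · -- W j = 1
        have hWj : W j ≠ 0 := by rw [h]; norm_num
        have hWm : W j ≠ -1 := by rw [h]; norm_num
        have hxz : z x j = x j := by rw [hzdef]; dsimp only; rw [if_neg hWm]
        have hx1z : x1 j = z1 j := by rw [hx1def]; dsimp only; rw [if_neg hWm]
        have h1 : u * z1 j ≤ z x j :=
          le_trans (mul_le_mul_of_nonneg_left (hz1U j) (le_of_lt hu0')) (hUz j hWj)
        have h2 : z x j - (1 - u) ≤ u * z1 j :=
          le_trans (hLz j hWj) (mul_le_mul_of_nonneg_left (hz1L j) (le_of_lt hu0'))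
        rw [hx1z]
        constructor
        · apply div_nonneg ?_ (le_of_lt hu1c); nlinarith
        · rw [div_le_one hu1c]; nlinarith
    have hsum0 : ∑ j, W j * x0 j ≤ (K:ℝ) - 1 := by
      have hlin0 : ∑ j, W j * x0 j = ((∑ j, W j * x j) - u * (∑ j, W j * x1 j)) / (1 - u) := by
        rw [eq_div_iff (ne_of_gt hu1c), Finset.sum_mul, Finset.mul_sum, ← Finset.sum_sub_distrib]
        refine Finset.sum_congr rfl fun j _ => ?_
        rw [hx0def]; dsimp only
        field_simp
      rw [hlin0, div_le_iff₀ hu1c, hsum1]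
      have hzx := hzsum x
      nlinarith [hT₀2]
    -- memberships
    have hx1mem := slice_mem_convexHull W hW K _ x1 le_rfl hx1box
      (by rw [hsum1]; linarith [hT₀K])
    have hWneg : ∀ j, -W j = -1 ∨ -W j = 0 ∨ -W j = 1 := by
      intro j; rcases hW j with h' | h' | h' <;> rw [h'] <;> norm_num
    have hnegsum : ∀ (y : Fin n → ℝ), ∑ j, -W j * y j = -∑ j, W j * y j := by
      intro y
      rw [← Finset.sum_neg_distrib]
      exact Finset.sum_congr rfl fun j _ => by ring
    have hx0mem := slice_mem_convexHull (fun j => -W j) hWneg (1 - K) _ x0 le_rfl hx0box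
      (by rw [hnegsum]; push_cast; linarith [hsum0])
    have hm1 : ((x1, (1:ℝ)) : (Fin n → ℝ) × ℝ) ∈ convexHull ℝ Vset :=
      hemb 1 _ (fun v hv => hmemV1 v hv.1 hv.2) x1 hx1mem
    have hm0 : ((x0, (0:ℝ)) : (Fin n → ℝ) × ℝ) ∈ convexHull ℝ Vset := by
      refine hemb 0 _ (fun v hv => hmemV0 v hv.1 ?_) x0 hx0mem
      have h2 := hv.2
      rw [hnegsum] at h2
      push_cast at h2
      linarith
    have hfinal : ((x, u) : (Fin n → ℝ) × ℝ) = u • (x1, (1:ℝ)) + (1 - u) • (x0, (0:ℝ)) := by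
      refine Prod.ext ?_ ?_
      · simp only [Prod.smul_mk, Prod.mk_add_mk]
        funext j
        simp only [Pi.add_apply, Pi.smul_apply, smul_eq_mul]
        rw [hx0def]; dsimp only
        field_simp
        ring
      · simp
    rw [hfinal]
    exact (convex_convexHull ℝ _) hm1 hm0 (le_of_lt hu0') (by linarith) (by ring)
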